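/- Let X_n be ℝ^m-valued and Y_n be ℝ^k-valued random vectors such that the families of laws (P_{X_n}) and (P_{Y_n}) are tight. Then condition AI-1 (merging of P_{(X_n,Y_n)} with P_{X_n} × P_{Y_n} in the Lévy–Prokhorov metric) holds if and only if for all t ∈ ℝ^m, s ∈ ℝ^k, the characteristic functions satisfy φ_{(X_n,Y_n)}(t,s) − φ_{X_n}(t)·φ_{Y_n}(s) → 0. -/

import Mathlib

open MeasureTheory Filter Complex

namespace S16


noncomputable def mono {m k : ℕ} (c : ℝ) [Fact (0 < c)] (nv : Fin m → ℤ) (ns : Fin k → ℤ) :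
    C((Fin m → AddCircle c) × (Fin k → AddCircle c), ℂ) where
  toFun := fun y => (∏ i, (fourier (nv i) (y.1 i) : ℂ)) * ∏ j, (fourier (ns j) (y.2 j) : ℂ)
  continuous_toFun := by
    apply Continuous.mul <;> apply continuous_finset_prod <;> intro i _
    · exact (map_continuous (fourier (nv i))).comp ((continuous_apply i).comp continuous_fst)
    · exact (map_continuous (fourier (ns i))).comp ((continuous_apply i).comp continuous_snd)

variable {m k : ℕ} (c : ℝ) [Fact (0 < c)]

lemma mono_mul (nv nv' : Fin m → ℤ) (ns ns' : Fin k → ℤ) :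
    mono c nv ns * mono c nv' ns' = mono c (nv + nv') (ns + ns') := by
  ext y
  simp only [ContinuousMap.mul_apply, mono, ContinuousMap.coe_mk, Pi.add_apply, fourier_add]
  rw [Finset.prod_mul_distrib, Finset.prod_mul_distrib]; ring

lemma mono_star (nv : Fin m → ℤ) (ns : Fin k → ℤ) :
    star (mono c nv ns) = mono c (-nv) (-ns) := by
  ext y
  simp only [ContinuousMap.star_apply, mono, ContinuousMap.coe_mk, Pi.neg_apply, fourier_neg]
  simp only [star_mul', star_prod, starRingEnd_apply]

lemma mono_one : mono (m := m) (k := k) c 0 0 = 1 := by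
  ext y; simp [mono, fourier_zero]

def Mset (m k : ℕ) (c : ℝ) [Fact (0 < c)] :
    Set C((Fin m → AddCircle c) × (Fin k → AddCircle c), ℂ) :=
  {f | ∃ nv ns, f = mono c nv ns}

noncomputable def starAlg (m k : ℕ) (c : ℝ) [Fact (0 < c)] :
    StarSubalgebra ℂ C((Fin m → AddCircle c) × (Fin k → AddCircle c), ℂ) where
  toSubalgebra := (Submodule.span ℂ (Mset m k c)).toSubalgebra
    (Submodule.subset_span ⟨0, 0, (mono_one c).symm⟩)
    (by
      intro f g hf hg
      induction hf using Submodule.span_induction generalizing g with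
      | mem x hx =>
        induction hg using Submodule.span_induction with
        | mem y hy =>
          obtain ⟨nv, ns, rfl⟩ := hx; obtain ⟨nv', ns', rfl⟩ := hy
          exact Submodule.subset_span ⟨_, _, mono_mul c nv nv' ns ns'⟩
        | zero => simpa using Submodule.zero_mem _
        | add y z _ _ h1 h2 => rw [mul_add]; exact Submodule.add_mem _ h1 h2
        | smul a y _ h1 => rw [mul_smul_comm]; exact Submodule.smul_mem _ _ h1
      | zero => simpa using Submodule.zero_mem _
      | add x y _ _ h1 h2 => rw [add_mul]; exact Submodule.add_mem _ (h1 g hg) (h2 g hg)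
      | smul a x _ h1 => rw [smul_mul_assoc]; exact Submodule.smul_mem _ _ (h1 g hg))
  star_mem' := by
    intro f hf
    induction hf using Submodule.span_induction with
    | mem x hx =>
      obtain ⟨nv, ns, rfl⟩ := hx
      exact Submodule.subset_span ⟨_, _, mono_star c nv ns⟩
    | zero => simpa using Submodule.zero_mem _
    | add x y _ _ h1 h2 => rw [star_add]; exact Submodule.add_mem _ h1 h2
    | smul a x _ h1 => rw [star_smul]; exact Submodule.smul_mem _ _ h1

lemma starAlg_sep : (starAlg m k c).SeparatesPoints := by
  intro x y hxy
  have : x.1 ≠ y.1 ∨ x.2 ≠ y.2 := by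
    by_contra hc'; push_neg at hc'; exact hxy (Prod.ext hc'.1 hc'.2)
  have key : ∀ (f : C(_, ℂ)), f ∈ Mset m k c → f x ≠ f y →
      ∃ g ∈ (fun f : C((Fin m → AddCircle c) × (Fin k → AddCircle c), ℂ) => (f : _ → ℂ)) ''
        (starAlg m k c : Set _), g x ≠ g y := fun f hf hne =>
    ⟨f, ⟨f, Submodule.subset_span hf, rfl⟩, hne⟩
  rcases this with h1 | h2
  · obtain ⟨i, hi⟩ := Function.ne_iff.mp h1
    refine key (mono c (Pi.single i 1) 0) ⟨_, _, rfl⟩ ?_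
    have hx : ∀ z : (Fin m → AddCircle c) × (Fin k → AddCircle c),
        mono c (Pi.single i 1) (0 : Fin k → ℤ) z = fourier 1 (z.1 i) := by
      intro z
      simp only [mono, ContinuousMap.coe_mk]
      rw [Finset.prod_eq_single i (fun b _ hb => by simp [Pi.single_eq_of_ne hb, fourier_zero])
        (by simp)]
      simp [fourier_zero]
    rw [hx, hx]
    intro hcon
    apply hi
    simp only [fourier_apply, one_zsmul] at hcon
    exact AddCircle.injective_toCircle (Fact.out : (0:ℝ) < c).ne' (Circle.coe_injective hcon)
  · obtain ⟨j, hj⟩ := Function.ne_iff.mp h2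
    refine key (mono c 0 (Pi.single j 1)) ⟨_, _, rfl⟩ ?_
    have hx : ∀ z : (Fin m → AddCircle c) × (Fin k → AddCircle c),
        mono c (0 : Fin m → ℤ) (Pi.single j 1) z = fourier 1 (z.2 j) := by
      intro z
      simp only [mono, ContinuousMap.coe_mk]
      rw [Finset.prod_eq_single j (fun b _ hb => by simp [Pi.single_eq_of_ne hb, fourier_zero])
        (by simp)]
      simp [fourier_zero]
    rw [hx, hx]
    intro hcon
    apply hj
    simp only [fourier_apply, one_zsmul] at hcon
    exact AddCircle.injective_toCircle (Fact.out : (0:ℝ) < c).ne' (Circle.coe_injective hcon)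

lemma dense_span (g : C((Fin m → AddCircle c) × (Fin k → AddCircle c), ℂ)) {ε : ℝ} (hε : 0 < ε) :
    ∃ p ∈ Submodule.span ℂ (Mset m k c), ∀ y, ‖g y - p y‖ ≤ ε := by
  have htop := ContinuousMap.starSubalgebra_topologicalClosure_eq_top_of_separatesPoints
    (starAlg m k c) (starAlg_sep c)
  have hg : g ∈ (starAlg m k c).topologicalClosure := htop ▸ trivial
  have : g ∈ closure ((starAlg m k c) : Set _) := hg
  obtain ⟨p, hp, hd⟩ := Metric.mem_closure_iff.mp this ε hε
  refine ⟨p, hp, fun y => ?_⟩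
  calc ‖g y - p y‖ = dist (g y) (p y) := (dist_eq_norm _ _).symm
    _ ≤ dist g p := ContinuousMap.dist_apply_le_dist y
    _ ≤ ε := hd.le


variable {m k : ℕ}

noncomputable def qmap (c : ℝ) [Fact (0 < c)] (z : (Fin m → ℝ) × (Fin k → ℝ)) :
    (Fin m → AddCircle c) × (Fin k → AddCircle c) :=
  (fun i => (z.1 i : AddCircle c), fun j => (z.2 j : AddCircle c))

lemma continuous_qmap (c : ℝ) [Fact (0 < c)] : Continuous (qmap (m := m) (k := k) c) := by
  apply Continuous.prodMk <;> apply continuous_pi <;> intro i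
  · exact (AddCircle.continuous_mk' c).comp ((continuous_apply i).comp continuous_fst)
  · exact (AddCircle.continuous_mk' c).comp ((continuous_apply i).comp continuous_snd)

lemma qmap_injOn (R : ℝ) (hR : 0 ≤ R) (c : ℝ) (hc : c = 2 * R + 1) [Fact (0 < c)]
    (S : Set ((Fin m → ℝ) × (Fin k → ℝ)))
    (hSR : ∀ z ∈ S, (∀ i, |z.1 i| ≤ R) ∧ (∀ j, |z.2 j| ≤ R)) :
    Set.InjOn (qmap c) S := by
  have key : ∀ x y : ℝ, |x| ≤ R → |y| ≤ R → (x : AddCircle c) = y → x = y := by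
    intro x y hx hy hxy
    rw [abs_le] at hx hy
    have hx' : x ∈ Set.Ico (-R) (-R + c) := ⟨hx.1, by rw [hc]; linarith⟩
    have hy' : y ∈ Set.Ico (-R) (-R + c) := ⟨hy.1, by rw [hc]; linarith⟩
    exact (AddCircle.coe_eq_coe_iff_of_mem_Ico hx' hy').mp hxy
  intro z hz w hw he
  have h1 := congrArg Prod.fst he
  have h2 := congrArg Prod.snd he
  ext i
  · exact key _ _ ((hSR z hz).1 i) ((hSR w hw).1 i) (congrFun h1 i)
  · exact key _ _ ((hSR z hz).2 i) ((hSR w hw).2 i) (congrFun h2 i)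

lemma exists_extension (R : ℝ) (hR : 0 ≤ R) (c : ℝ) (hc : c = 2 * R + 1) [Fact (0 < c)]
    (S : Set ((Fin m → ℝ) × (Fin k → ℝ))) (hS : IsCompact S)
    (hSR : ∀ z ∈ S, (∀ i, |z.1 i| ≤ R) ∧ (∀ j, |z.2 j| ≤ R))
    (h : ((Fin m → ℝ) × (Fin k → ℝ)) → ℝ) (hh : Continuous h)
    (C : ℝ) (hC : 0 ≤ C) (hb : ∀ z, |h z| ≤ C) :
    ∃ g : C((Fin m → AddCircle c) × (Fin k → AddCircle c), ℝ),
      (∀ z ∈ S, g (qmap c z) = h z) ∧ ∀ y, |g y| ≤ C := by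
  haveI : CompactSpace ↥S := isCompact_iff_compactSpace.mp hS
  have hinj := qmap_injOn R hR c hc S hSR
  have hbij : Function.Bijective (fun x : ↥S => (⟨qmap c x.1, ⟨x.1, x.2, rfl⟩⟩ : ↥(qmap c '' S))) := by
    constructor
    · intro a b hab
      exact Subtype.ext (hinj a.2 b.2 (congrArg Subtype.val hab))
    · rintro ⟨w, z, hz, rfl⟩
      exact ⟨⟨z, hz⟩, rfl⟩
  let e := Equiv.ofBijective _ hbij
  have hec : Continuous e :=
    Continuous.subtype_mk ((continuous_qmap c).comp continuous_subtype_val) _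
  let H := Continuous.homeoOfEquivCompactToT2 (f := e) hec
  let g0 : C(↥(qmap c '' S), ℝ) :=
    ⟨fun w => h (H.symm w).1, hh.comp (continuous_subtype_val.comp H.symm.continuous)⟩
  obtain ⟨g1, hg1⟩ := g0.exists_restrict_eq (hS.image (continuous_qmap c)).isClosed
  refine ⟨⟨fun y => max (-C) (min C (g1 y)),
      continuous_const.max (continuous_const.min g1.continuous)⟩, ?_, ?_⟩
  · intro z hz
    have hmem : qmap c z ∈ qmap c '' S := ⟨z, hz, rfl⟩
    have e1 : g1 (qmap c z) = g0 ⟨qmap c z, hmem⟩ := by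
      have := congrFun (congrArg (fun f : C(↥(qmap c '' S), ℝ) => (f : ↥(qmap c '' S) → ℝ)) hg1)
        ⟨qmap c z, hmem⟩
      simpa [ContinuousMap.restrict] using this
    have e2 : H.symm ⟨qmap c z, hmem⟩ = ⟨z, hz⟩ := by
      apply H.injective
      rw [Homeomorph.apply_symm_apply]
      rfl
    have e3 : g0 ⟨qmap c z, hmem⟩ = h z := by
      simp only [g0, ContinuousMap.coe_mk, e2]
    have hhz := hb z
    rw [abs_le] at hhz
    simp only [ContinuousMap.coe_mk, e1, e3]
    rw [min_eq_right hhz.2, max_eq_right hhz.1]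
  · intro y
    simp only [ContinuousMap.coe_mk]
    rw [abs_le]
    constructor
    · exact le_max_left _ _
    · exact max_le (by linarith) (min_le_left _ _)


variable {m k : ℕ}

lemma mono_qmap (c : ℝ) [Fact (0 < c)] (nv : Fin m → ℤ) (ns : Fin k → ℤ)
    (z : (Fin m → ℝ) × (Fin k → ℝ)) :
    mono c nv ns (qmap c z)
      = Complex.exp (Complex.I * ((∑ i, (2 * Real.pi * nv i / c) * z.1 i
          + ∑ j, (2 * Real.pi * ns j / c) * z.2 j : ℝ) : ℂ)) := by
  simp only [mono, ContinuousMap.coe_mk, qmap, fourier_coe_apply]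
  rw [← Complex.exp_sum, ← Complex.exp_sum, ← Complex.exp_add]
  congr 1
  push_cast
  rw [mul_add, Finset.mul_sum, Finset.mul_sum]
  congr 1 <;> apply Finset.sum_congr rfl <;> intro i _ <;> ring


lemma integrable_bdd {α : Type*} [MeasurableSpace α] {μ : Measure α} [IsFiniteMeasure μ]
    {F : Type*} [NormedAddCommGroup F] {f : α → F}
    (hf : AEStronglyMeasurable f μ) {C : ℝ} (hC : ∀ a, ‖f a‖ ≤ C) : Integrable f μ :=
  (integrable_const C).mono' hf (Eventually.of_forall hC)

lemma span_tendsto (c : ℝ) [Fact (0 < c)]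
    (μ ν : ℕ → Measure ((Fin m → ℝ) × (Fin k → ℝ)))
    [∀ n, IsProbabilityMeasure (μ n)] [∀ n, IsProbabilityMeasure (ν n)]
    (hchar : ∀ t : Fin m → ℝ, ∀ s : Fin k → ℝ,
      Tendsto (fun n =>
        (∫ z, Complex.exp (Complex.I * ((∑ i, t i * z.1 i + ∑ j, s j * z.2 j : ℝ) : ℂ)) ∂μ n)
        - ∫ z, Complex.exp (Complex.I * ((∑ i, t i * z.1 i + ∑ j, s j * z.2 j : ℝ) : ℂ)) ∂ν n)
        atTop (nhds 0))
    (p : C((Fin m → AddCircle c) × (Fin k → AddCircle c), ℂ))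
    (hp : p ∈ Submodule.span ℂ (Mset m k c)) :
    Tendsto (fun n => (∫ z, p (qmap c z) ∂μ n) - ∫ z, p (qmap c z) ∂ν n) atTop (nhds 0) := by
  have hint : ∀ (f : C((Fin m → AddCircle c) × (Fin k → AddCircle c), ℂ))
      (κ : Measure ((Fin m → ℝ) × (Fin k → ℝ))) [IsProbabilityMeasure κ],
      Integrable (fun z => f (qmap c z)) κ := fun f κ _ =>
    integrable_bdd ((map_continuous f).comp (continuous_qmap c)).aestronglyMeasurable
      (fun z => f.norm_coe_le_norm _)
  induction hp using Submodule.span_induction with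
  | mem f hf =>
    obtain ⟨nv, ns, rfl⟩ := hf
    simpa only [mono_qmap] using
      hchar (fun i => 2 * Real.pi * nv i / c) (fun j => 2 * Real.pi * ns j / c)
  | zero => simpa using tendsto_const_nhds
  | add f g hfm hgm h1 h2 =>
    have hlim := h1.add h2
    rw [add_zero] at hlim
    have he : ∀ n, (∫ z, (f + g) (qmap c z) ∂μ n) - ∫ z, (f + g) (qmap c z) ∂ν n
        = ((∫ z, f (qmap c z) ∂μ n) - ∫ z, f (qmap c z) ∂ν n)
          + ((∫ z, g (qmap c z) ∂μ n) - ∫ z, g (qmap c z) ∂ν n) := by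
      intro n
      simp only [ContinuousMap.add_apply]
      rw [integral_add (hint f _) (hint g _), integral_add (hint f _) (hint g _)]
      ring
    simp only [he]
    exact hlim
  | smul a f hfm h1 =>
    have hlim := h1.const_smul a
    rw [smul_zero] at hlim
    have he : ∀ n, (∫ z, (a • f) (qmap c z) ∂μ n) - ∫ z, (a • f) (qmap c z) ∂ν n
        = a • ((∫ z, f (qmap c z) ∂μ n) - ∫ z, f (qmap c z) ∂ν n) := by
      intro n
      simp only [ContinuousMap.smul_apply]
      rw [integral_smul, integral_smul, smul_sub]
    simp only [he]
    exact hlim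

lemma merge (μ ν : ℕ → Measure ((Fin m → ℝ) × (Fin k → ℝ)))
    [∀ n, IsProbabilityMeasure (μ n)] [∀ n, IsProbabilityMeasure (ν n)]
    (htight : ∀ ε : ℝ, 0 < ε → ∃ S, IsCompact S ∧
      ∀ n, (μ n S).toReal ≥ 1 - ε ∧ (ν n S).toReal ≥ 1 - ε)
    (hchar : ∀ t : Fin m → ℝ, ∀ s : Fin k → ℝ,
      Tendsto (fun n =>
        (∫ z, Complex.exp (Complex.I * ((∑ i, t i * z.1 i + ∑ j, s j * z.2 j : ℝ) : ℂ)) ∂μ n)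
        - ∫ z, Complex.exp (Complex.I * ((∑ i, t i * z.1 i + ∑ j, s j * z.2 j : ℝ) : ℂ)) ∂ν n)
        atTop (nhds 0))
    (h : ((Fin m → ℝ) × (Fin k → ℝ)) → ℝ) (hh : Continuous h)
    (C : ℝ) (hb : ∀ z, |h z| ≤ C) :
    Tendsto (fun n => (∫ z, h z ∂μ n) - ∫ z, h z ∂ν n) atTop (nhds 0) := by
  have hC0 : 0 ≤ C := le_trans (abs_nonneg _) (hb 0)
  rw [NormedAddCommGroup.tendsto_nhds_zero]
  intro ε hε
  set δ := ε / (8 * C + 8) with hδdef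
  have hδ : 0 < δ := by positivity
  have hεδ : (8 * C + 8) * δ = ε := by rw [hδdef]; field_simp
  obtain ⟨S, hScomp, hSbd⟩ := htight δ hδ
  obtain ⟨R₀, hR₀⟩ := hScomp.isBounded.subset_closedBall 0
  set R := max R₀ 0 with hRdef
  have hR : 0 ≤ R := le_max_right _ _
  have hSR : ∀ z ∈ S, (∀ i, |z.1 i| ≤ R) ∧ (∀ j, |z.2 j| ≤ R) := by
    intro z hz
    have hd : dist z 0 ≤ R :=
      le_trans (by simpa [Metric.mem_closedBall] using hR₀ hz) (le_max_left _ _)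
    rw [Prod.dist_eq, max_le_iff] at hd
    constructor
    · intro i
      calc |z.1 i| = dist (z.1 i) ((0 : Fin m → ℝ) i) := by simp [Real.dist_eq]
        _ ≤ dist z.1 0 := dist_le_pi_dist _ _ i
        _ ≤ R := hd.1
    · intro j
      calc |z.2 j| = dist (z.2 j) ((0 : Fin k → ℝ) j) := by simp [Real.dist_eq]
        _ ≤ dist z.2 0 := dist_le_pi_dist _ _ j
        _ ≤ R := hd.2
  set c := 2 * R + 1 with hcdef
  haveI : Fact (0 < c) := ⟨by positivity⟩
  obtain ⟨g, hgS, hgB⟩ := exists_extension R hR c hcdef S hScomp hSR h hh C hC0 hb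
  set g' : C((Fin m → AddCircle c) × (Fin k → AddCircle c), ℂ) :=
    ⟨fun y => (g y : ℂ), Complex.continuous_ofReal.comp (map_continuous g)⟩ with hg'def
  obtain ⟨p, hpmem, hpapp⟩ := dense_span c g' hδ
  have hTp := span_tendsto c μ ν hchar p hpmem
  have hev := NormedAddCommGroup.tendsto_nhds_zero.mp hTp δ hδ
  have Smeas : MeasurableSet S := hScomp.isClosed.measurableSet
  have aux : ∀ (κ : Measure ((Fin m → ℝ) × (Fin k → ℝ))), IsProbabilityMeasure κ →
      (κ S).toReal ≥ 1 - δ →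
      |(∫ z, h z ∂κ) - (∫ z, p (qmap c z) ∂κ).re| ≤ 2 * C * δ + δ := by
    intro κ hκprob hκS
    have hκc : (κ Sᶜ).toReal ≤ δ := by
      have h1 : κ S + κ Sᶜ = 1 := by
        rw [measure_add_measure_compl Smeas, measure_univ]
      have h2 : (κ S).toReal + (κ Sᶜ).toReal = 1 := by
        rw [← ENNReal.toReal_add (measure_ne_top κ S) (measure_ne_top κ Sᶜ), h1]
        simp
      linarith
    have hGint : Integrable (fun z => g (qmap c z)) κ :=
      integrable_bdd ((map_continuous g).comp (continuous_qmap c)).aestronglyMeasurable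
        (fun z => by rw [Real.norm_eq_abs]; exact hgB _)
    have hhint : Integrable h κ :=
      integrable_bdd hh.aestronglyMeasurable (fun z => by rw [Real.norm_eq_abs]; exact hb z)
    have hpint : Integrable (fun z => p (qmap c z)) κ :=
      integrable_bdd ((map_continuous p).comp (continuous_qmap c)).aestronglyMeasurable
        (fun z => p.norm_coe_le_norm _)
    have step1 : |(∫ z, h z ∂κ) - ∫ z, g (qmap c z) ∂κ| ≤ 2 * C * δ := by
      rw [← integral_sub hhint hGint]
      refine le_trans (by simpa [Real.norm_eq_abs] using
        norm_integral_le_integral_norm (μ := κ) (fun z => h z - g (qmap c z))) ?_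
      have hsplit : ∫ z, |h z - g (qmap c z)| ∂κ
          = (∫ z in S, |h z - g (qmap c z)| ∂κ) + ∫ z in Sᶜ, |h z - g (qmap c z)| ∂κ :=
        (integral_add_compl Smeas (hhint.sub hGint).abs).symm
      rw [hsplit]
      have t1 : (∫ z in S, |h z - g (qmap c z)| ∂κ) = 0 := by
        rw [setIntegral_congr_fun Smeas (g := fun _ => (0:ℝ))
          (fun z hz => by simp [hgS z hz]), integral_zero]
      have t2 : (∫ z in Sᶜ, |h z - g (qmap c z)| ∂κ) ≤ 2 * C * δ := by
        calc (∫ z in Sᶜ, |h z - g (qmap c z)| ∂κ) ≤ ∫ _z in Sᶜ, (2*C) ∂κ := by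
              refine setIntegral_mono_on ((hhint.sub hGint).abs.integrableOn)
                (integrableOn_const (measure_ne_top κ _) enorm_ne_top) Smeas.compl ?_
              intro z _hz
              calc |h z - g (qmap c z)| ≤ |h z| + |g (qmap c z)| := by
                    rw [sub_eq_add_neg]
                    exact (abs_add_le _ _).trans (by rw [abs_neg])
                _ ≤ C + C := add_le_add (hb z) (hgB _)
                _ = 2*C := by ring
          _ = (κ Sᶜ).toReal * (2*C) := by rw [setIntegral_const]; rfl
          _ ≤ δ * (2*C) := mul_le_mul_of_nonneg_right hκc (by positivity)
          _ = 2*C*δ := by ring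
      linarith
    have hrew : (∫ z, p (qmap c z) ∂κ).re = ∫ z, (p (qmap c z)).re ∂κ := by
      have := integral_re hpint
      simpa [RCLike.re_to_complex] using this.symm
    have hpreint : Integrable (fun z => (p (qmap c z)).re) κ := by
      simpa [RCLike.re_to_complex] using hpint.re
    have step2 : |(∫ z, g (qmap c z) ∂κ) - (∫ z, p (qmap c z) ∂κ).re| ≤ δ := by
      rw [hrew, ← integral_sub hGint hpreint]
      refine le_trans (by simpa [Real.norm_eq_abs] using
        norm_integral_le_integral_norm (μ := κ) (fun z => g (qmap c z) - (p (qmap c z)).re)) ?_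
      have hptw : ∀ z, |g (qmap c z) - (p (qmap c z)).re| ≤ δ := by
        intro z
        calc |g (qmap c z) - (p (qmap c z)).re|
            = |(g' (qmap c z) - p (qmap c z)).re| := by
              simp [hg'def, Complex.sub_re]
          _ ≤ ‖g' (qmap c z) - p (qmap c z)‖ := Complex.abs_re_le_norm _
          _ ≤ δ := by simpa using hpapp (qmap c z)
      calc (∫ z, |g (qmap c z) - (p (qmap c z)).re| ∂κ) ≤ ∫ _z, δ ∂κ :=
            integral_mono (hGint.sub hpreint).abs (integrable_const δ) (fun z => hptw z)
        _ = δ := by simp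
    calc |(∫ z, h z ∂κ) - (∫ z, p (qmap c z) ∂κ).re|
        ≤ |(∫ z, h z ∂κ) - ∫ z, g (qmap c z) ∂κ|
          + |(∫ z, g (qmap c z) ∂κ) - (∫ z, p (qmap c z) ∂κ).re| := abs_sub_le _ _ _
      _ ≤ 2 * C * δ + δ := add_le_add step1 step2
  filter_upwards [hev] with n hn
  have hμa := aux (μ n) inferInstance (hSbd n).1
  have hνa := aux (ν n) inferInstance (hSbd n).2
  have hre : |(∫ z, p (qmap c z) ∂μ n).re - (∫ z, p (qmap c z) ∂ν n).re|
      ≤ ‖(∫ z, p (qmap c z) ∂μ n) - ∫ z, p (qmap c z) ∂ν n‖ := by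
    rw [← Complex.sub_re]
    exact Complex.abs_re_le_norm _
  have hCδ : 0 ≤ C * δ := mul_nonneg hC0 hδ.le
  rw [Real.norm_eq_abs]
  have tri : |(∫ z, h z ∂μ n) - ∫ z, h z ∂ν n|
      ≤ |(∫ z, h z ∂μ n) - (∫ z, p (qmap c z) ∂μ n).re|
        + |(∫ z, p (qmap c z) ∂μ n).re - (∫ z, p (qmap c z) ∂ν n).re|
        + |(∫ z, p (qmap c z) ∂ν n).re - ∫ z, h z ∂ν n| := by
    have a1 := abs_sub_le ((∫ z, h z ∂μ n)) ((∫ z, p (qmap c z) ∂μ n).re) ((∫ z, h z ∂ν n))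
    have a2 := abs_sub_le ((∫ z, p (qmap c z) ∂μ n).re) ((∫ z, p (qmap c z) ∂ν n).re)
      ((∫ z, h z ∂ν n))
    linarith
  have hνa' : |(∫ z, p (qmap c z) ∂ν n).re - ∫ z, h z ∂ν n| ≤ 2 * C * δ + δ := by
    rw [abs_sub_comm]; exact hνa
  linarith

lemma lipschitz_cos : LipschitzWith 1 Real.cos := by
  apply lipschitzWith_of_nnnorm_deriv_le Real.differentiable_cos
  intro x
  rw [Real.deriv_cos]
  rw [← NNReal.coe_le_coe, coe_nnnorm, Real.norm_eq_abs, abs_neg, NNReal.coe_one]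
  exact Real.abs_sin_le_one x

lemma lipschitz_sin : LipschitzWith 1 Real.sin := by
  apply lipschitzWith_of_nnnorm_deriv_le Real.differentiable_sin
  intro x
  rw [Real.deriv_sin]
  rw [← NNReal.coe_le_coe, coe_nnnorm, Real.norm_eq_abs, NNReal.coe_one]
  exact Real.abs_cos_le_one x

-- linear functional UC
lemma uc_lin {m k : ℕ} (t : Fin m → ℝ) (s : Fin k → ℝ) :
    UniformContinuous (fun z : (Fin m → ℝ) × (Fin k → ℝ) =>
      ∑ i, t i * z.1 i + ∑ j, s j * z.2 j) := by
  let lin : ((Fin m → ℝ) × (Fin k → ℝ)) →ₗ[ℝ] ℝ :=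
    { toFun := fun z => ∑ i, t i * z.1 i + ∑ j, s j * z.2 j
      map_add' := by
        intro z w
        simp only [Prod.fst_add, Prod.snd_add, Pi.add_apply, mul_add, Finset.sum_add_distrib]
        ring
      map_smul' := by
        intro a z
        simp only [Prod.smul_fst, Prod.smul_snd, Pi.smul_apply, smul_eq_mul, RingHom.id_apply]
        rw [mul_add, Finset.mul_sum, Finset.mul_sum]
        congr 1 <;> exact Finset.sum_congr rfl (fun i _ => by ring) }
  have hc : Continuous lin := lin.continuous_of_finiteDimensional
  exact ContinuousLinearMap.uniformContinuous ⟨lin, hc⟩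

lemma integral_exp_eq {α : Type*} [MeasurableSpace α] (κ : Measure α) [IsProbabilityMeasure κ]
    (θ : α → ℝ) (hθ : AEStronglyMeasurable θ κ) :
    ∫ a, Complex.exp (Complex.I * (θ a : ℂ)) ∂κ
      = ↑(∫ a, Real.cos (θ a) ∂κ) + ↑(∫ a, Real.sin (θ a) ∂κ) * Complex.I := by
  have h1 : ∀ a, Complex.exp (Complex.I * (θ a : ℂ))
      = (↑(Real.cos (θ a)) : ℂ) + ↑(Real.sin (θ a)) * Complex.I := by
    intro a
    rw [mul_comm, Complex.exp_mul_I, Complex.ofReal_cos, Complex.ofReal_sin]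
  simp only [h1]
  have hcosm : AEStronglyMeasurable (fun a => Real.cos (θ a)) κ :=
    Real.continuous_cos.comp_aestronglyMeasurable hθ
  have hsinm : AEStronglyMeasurable (fun a => Real.sin (θ a)) κ :=
    Real.continuous_sin.comp_aestronglyMeasurable hθ
  have hcos : Integrable (fun a => (↑(Real.cos (θ a)) : ℂ)) κ :=
    integrable_bdd (Complex.continuous_ofReal.comp_aestronglyMeasurable hcosm)
      (C := 1) (fun a => by rw [Complex.norm_real, Real.norm_eq_abs]; exact Real.abs_cos_le_one _)
  have hsin : Integrable (fun a => (↑(Real.sin (θ a)) : ℂ) * Complex.I) κ := by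
    apply Integrable.mul_const
    exact integrable_bdd (Complex.continuous_ofReal.comp_aestronglyMeasurable hsinm)
      (C := 1) (fun a => by rw [Complex.norm_real, Real.norm_eq_abs]; exact Real.abs_sin_le_one _)
  rw [integral_add hcos hsin, integral_mul_const]
  have hco : ∫ a, (↑(Real.cos (θ a)) : ℂ) ∂κ = ↑(∫ a, Real.cos (θ a) ∂κ) := by
    simpa using integral_ofReal (𝕜 := ℂ) (f := fun a => Real.cos (θ a)) (μ := κ)
  have hsi : ∫ a, (↑(Real.sin (θ a)) : ℂ) ∂κ = ↑(∫ a, Real.sin (θ a) ∂κ) := by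
    simpa using integral_ofReal (𝕜 := ℂ) (f := fun a => Real.sin (θ a)) (μ := κ)
  rw [hco, hsi]

lemma prob_toReal_compl {α : Type*} [MeasurableSpace α] (κ : Measure α) [IsProbabilityMeasure κ]
    {A : Set α} (hA : MeasurableSet A) : (κ Aᶜ).toReal = 1 - (κ A).toReal := by
  have h1 : κ A + κ Aᶜ = 1 := by rw [measure_add_measure_compl hA, measure_univ]
  have h2 : (κ A).toReal + (κ Aᶜ).toReal = 1 := by
    rw [← ENNReal.toReal_add (measure_ne_top _ _) (measure_ne_top _ _), h1]; simp
  linarith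

end S16

open S16 in
theorem stmt_16 {Ω : Type*} [MeasurableSpace Ω]
    (P : Measure Ω) [IsProbabilityMeasure P] (m k : ℕ)
    (X : ℕ → Ω → (Fin m → ℝ)) (Y : ℕ → Ω → (Fin k → ℝ))
    (hX : ∀ n, Measurable (X n)) (hY : ∀ n, Measurable (Y n))
    (htightX : ∀ ε : ℝ, 0 < ε → ∃ K : Set (Fin m → ℝ), IsCompact K ∧
      ∀ n, (P {ω | X n ω ∈ K}).toReal ≥ 1 - ε)
    (htightY : ∀ ε : ℝ, 0 < ε → ∃ K : Set (Fin k → ℝ), IsCompact K ∧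
      ∀ n, (P {ω | Y n ω ∈ K}).toReal ≥ 1 - ε) :
    (∀ h : (Fin m → ℝ) × (Fin k → ℝ) → ℝ,
      UniformContinuous h → (∃ C, ∀ z, |h z| ≤ C) →
      Tendsto (fun n =>
          (∫ ω, h (X n ω, Y n ω) ∂P)
            - ∫ z, h z ∂((P.map (X n)).prod (P.map (Y n))))
        atTop (nhds 0))
    ↔ (∀ t : Fin m → ℝ, ∀ s : Fin k → ℝ,
      Tendsto (fun n =>
          (∫ ω, Complex.exp (Complex.I * ((∑ i, t i * X n ω i
              + ∑ j, s j * Y n ω j : ℝ) : ℂ)) ∂P)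
            - (∫ ω, Complex.exp (Complex.I * ((∑ i, t i * X n ω i : ℝ) : ℂ)) ∂P)
              * (∫ ω, Complex.exp (Complex.I * ((∑ j, s j * Y n ω j : ℝ) : ℂ)) ∂P))
        atTop (nhds 0)) := by
  classical
  have hpair : ∀ n, Measurable (fun ω => (X n ω, Y n ω)) := fun n => (hX n).prodMk (hY n)
  let μs : ℕ → Measure ((Fin m → ℝ) × (Fin k → ℝ)) := fun n => P.map (fun ω => (X n ω, Y n ω))
  let νs : ℕ → Measure ((Fin m → ℝ) × (Fin k → ℝ)) := fun n => (P.map (X n)).prod (P.map (Y n))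
  haveI hμP : ∀ n, IsProbabilityMeasure (μs n) :=
    fun n => Measure.isProbabilityMeasure_map (hpair n).aemeasurable
  haveI hXP : ∀ n, IsProbabilityMeasure (P.map (X n)) :=
    fun n => Measure.isProbabilityMeasure_map (hX n).aemeasurable
  haveI hYP : ∀ n, IsProbabilityMeasure (P.map (Y n)) :=
    fun n => Measure.isProbabilityMeasure_map (hY n).aemeasurable
  haveI hνP : ∀ n, IsProbabilityMeasure (νs n) := fun n => by
    exact MeasureTheory.Measure.prod.instIsProbabilityMeasure _ _
  have hlin_cont : ∀ (t : Fin m → ℝ) (s : Fin k → ℝ),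
      Continuous (fun z : (Fin m → ℝ) × (Fin k → ℝ) =>
        ∑ i, t i * z.1 i + ∑ j, s j * z.2 j) := fun t s => (uc_lin t s).continuous
  have hexp_cont : ∀ (t : Fin m → ℝ) (s : Fin k → ℝ),
      Continuous (fun z : (Fin m → ℝ) × (Fin k → ℝ) =>
        Complex.exp (Complex.I * ((∑ i, t i * z.1 i + ∑ j, s j * z.2 j : ℝ) : ℂ))) :=
    fun t s => Complex.continuous_exp.comp
      (continuous_const.mul (Complex.continuous_ofReal.comp (hlin_cont t s)))
  have hXsum_cont : ∀ (t : Fin m → ℝ),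
      Continuous (fun x : Fin m → ℝ => Complex.exp (Complex.I * ((∑ i, t i * x i : ℝ) : ℂ))) :=
    fun t => Complex.continuous_exp.comp (continuous_const.mul
      (Complex.continuous_ofReal.comp
        (continuous_finset_sum _ (fun i _ => continuous_const.mul (continuous_apply i)))))
  have hYsum_cont : ∀ (s : Fin k → ℝ),
      Continuous (fun y : Fin k → ℝ => Complex.exp (Complex.I * ((∑ j, s j * y j : ℝ) : ℂ))) :=
    fun s => Complex.continuous_exp.comp (continuous_const.mul
      (Complex.continuous_ofReal.comp
        (continuous_finset_sum _ (fun j _ => continuous_const.mul (continuous_apply j)))))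
  have hjoint_eq : ∀ (t : Fin m → ℝ) (s : Fin k → ℝ) (n : ℕ),
      (∫ ω, Complex.exp (Complex.I * ((∑ i, t i * X n ω i
          + ∑ j, s j * Y n ω j : ℝ) : ℂ)) ∂P)
        = ∫ z, Complex.exp (Complex.I *
            ((∑ i, t i * z.1 i + ∑ j, s j * z.2 j : ℝ) : ℂ)) ∂μs n :=
    fun t s n =>
      (integral_map (hpair n).aemeasurable (hexp_cont t s).aestronglyMeasurable).symm
  have hprod_eq : ∀ (t : Fin m → ℝ) (s : Fin k → ℝ) (n : ℕ),
      (∫ ω, Complex.exp (Complex.I * ((∑ i, t i * X n ω i : ℝ) : ℂ)) ∂P)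
        * (∫ ω, Complex.exp (Complex.I * ((∑ j, s j * Y n ω j : ℝ) : ℂ)) ∂P)
      = ∫ z, Complex.exp (Complex.I *
          ((∑ i, t i * z.1 i + ∑ j, s j * z.2 j : ℝ) : ℂ)) ∂νs n := by
    intro t s n
    have h1 : (∫ ω, Complex.exp (Complex.I * ((∑ i, t i * X n ω i : ℝ) : ℂ)) ∂P)
        = ∫ x, Complex.exp (Complex.I * ((∑ i, t i * x i : ℝ) : ℂ)) ∂(P.map (X n)) :=
      (integral_map (hX n).aemeasurable (hXsum_cont t).aestronglyMeasurable).symm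
    have h2 : (∫ ω, Complex.exp (Complex.I * ((∑ j, s j * Y n ω j : ℝ) : ℂ)) ∂P)
        = ∫ y, Complex.exp (Complex.I * ((∑ j, s j * y j : ℝ) : ℂ)) ∂(P.map (Y n)) :=
      (integral_map (hY n).aemeasurable (hYsum_cont s).aestronglyMeasurable).symm
    rw [h1, h2, ← integral_prod_mul]
    refine integral_congr_ae (Filter.Eventually.of_forall (fun z => ?_))
    simp only [Complex.ofReal_add, mul_add, Complex.exp_add]
  have hchar_eq : ∀ (t : Fin m → ℝ) (s : Fin k → ℝ) (n : ℕ),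
      ((∫ ω, Complex.exp (Complex.I * ((∑ i, t i * X n ω i
          + ∑ j, s j * Y n ω j : ℝ) : ℂ)) ∂P)
        - (∫ ω, Complex.exp (Complex.I * ((∑ i, t i * X n ω i : ℝ) : ℂ)) ∂P)
          * (∫ ω, Complex.exp (Complex.I * ((∑ j, s j * Y n ω j : ℝ) : ℂ)) ∂P))
      = (∫ z, Complex.exp (Complex.I *
            ((∑ i, t i * z.1 i + ∑ j, s j * z.2 j : ℝ) : ℂ)) ∂μs n)
        - ∫ z, Complex.exp (Complex.I *
            ((∑ i, t i * z.1 i + ∑ j, s j * z.2 j : ℝ) : ℂ)) ∂νs n := by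
    intro t s n
    rw [hjoint_eq t s n, hprod_eq t s n]
  constructor
  · intro hLHS t s
    have hA := hLHS (fun z => Real.cos (∑ i, t i * z.1 i + ∑ j, s j * z.2 j))
      (lipschitz_cos.uniformContinuous.comp (uc_lin t s))
      ⟨1, fun z => Real.abs_cos_le_one _⟩
    have hB := hLHS (fun z => Real.sin (∑ i, t i * z.1 i + ∑ j, s j * z.2 j))
      (lipschitz_sin.uniformContinuous.comp (uc_lin t s))
      ⟨1, fun z => Real.abs_sin_le_one _⟩
    have hA' : Tendsto (fun n =>
        (∫ z, Real.cos (∑ i, t i * z.1 i + ∑ j, s j * z.2 j) ∂μs n)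
          - ∫ z, Real.cos (∑ i, t i * z.1 i + ∑ j, s j * z.2 j) ∂νs n) atTop (nhds 0) := by
      refine Filter.Tendsto.congr (fun n => ?_) hA
      congr 1
      exact (integral_map (φ := fun ω => (X n ω, Y n ω)) (hpair n).aemeasurable
        (f := fun z => Real.cos (∑ i, t i * z.1 i + ∑ j, s j * z.2 j))
        ((Real.continuous_cos.comp (hlin_cont t s)).aestronglyMeasurable)).symm
    have hB' : Tendsto (fun n =>
        (∫ z, Real.sin (∑ i, t i * z.1 i + ∑ j, s j * z.2 j) ∂μs n)
          - ∫ z, Real.sin (∑ i, t i * z.1 i + ∑ j, s j * z.2 j) ∂νs n) atTop (nhds 0) := by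
      refine Filter.Tendsto.congr (fun n => ?_) hB
      congr 1
      exact (integral_map (φ := fun ω => (X n ω, Y n ω)) (hpair n).aemeasurable
        (f := fun z => Real.sin (∑ i, t i * z.1 i + ∑ j, s j * z.2 j))
        ((Real.continuous_sin.comp (hlin_cont t s)).aestronglyMeasurable)).symm
    refine Filter.Tendsto.congr (fun n => (hchar_eq t s n).symm) ?_
    have key : ∀ n, (∫ z, Complex.exp (Complex.I *
          ((∑ i, t i * z.1 i + ∑ j, s j * z.2 j : ℝ) : ℂ)) ∂μs n)
        - ∫ z, Complex.exp (Complex.I *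
          ((∑ i, t i * z.1 i + ∑ j, s j * z.2 j : ℝ) : ℂ)) ∂νs n
      = (((∫ z, Real.cos (∑ i, t i * z.1 i + ∑ j, s j * z.2 j) ∂μs n)
            - ∫ z, Real.cos (∑ i, t i * z.1 i + ∑ j, s j * z.2 j) ∂νs n : ℝ) : ℂ)
        + (((∫ z, Real.sin (∑ i, t i * z.1 i + ∑ j, s j * z.2 j) ∂μs n)
            - ∫ z, Real.sin (∑ i, t i * z.1 i + ∑ j, s j * z.2 j) ∂νs n : ℝ) : ℂ)
          * Complex.I := by
      intro n
      rw [integral_exp_eq (μs n) _ (hlin_cont t s).aestronglyMeasurable,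
          integral_exp_eq (νs n) _ (hlin_cont t s).aestronglyMeasurable]
      push_cast
      ring
    refine Filter.Tendsto.congr (fun n => (key n).symm) ?_
    have t1 : Tendsto (fun n =>
        (((∫ z, Real.cos (∑ i, t i * z.1 i + ∑ j, s j * z.2 j) ∂μs n)
          - ∫ z, Real.cos (∑ i, t i * z.1 i + ∑ j, s j * z.2 j) ∂νs n : ℝ) : ℂ))
        atTop (nhds 0) := by
      simpa only [Complex.ofReal_zero, Function.comp_def] using (Complex.continuous_ofReal.tendsto 0).comp hA'
    have t2 : Tendsto (fun n =>
        (((∫ z, Real.sin (∑ i, t i * z.1 i + ∑ j, s j * z.2 j) ∂μs n)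
          - ∫ z, Real.sin (∑ i, t i * z.1 i + ∑ j, s j * z.2 j) ∂νs n : ℝ) : ℂ)
        * Complex.I) atTop (nhds 0) := by
      simpa only [Complex.ofReal_zero, zero_mul, Function.comp_def] using Filter.Tendsto.mul_const Complex.I
        ((Complex.continuous_ofReal.tendsto 0).comp hB')
    simpa only [add_zero] using t1.add t2
  · rintro hRHS h hUC ⟨C, hC⟩
    have hchar' : ∀ (t : Fin m → ℝ) (s : Fin k → ℝ),
        Tendsto (fun n =>
          (∫ z, Complex.exp (Complex.I *
              ((∑ i, t i * z.1 i + ∑ j, s j * z.2 j : ℝ) : ℂ)) ∂μs n)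
            - ∫ z, Complex.exp (Complex.I *
              ((∑ i, t i * z.1 i + ∑ j, s j * z.2 j : ℝ) : ℂ)) ∂νs n) atTop (nhds 0) :=
      fun t s => Filter.Tendsto.congr (hchar_eq t s) (hRHS t s)
    have htight' : ∀ ε : ℝ, 0 < ε → ∃ S, IsCompact S ∧
        ∀ n, ((μs n) S).toReal ≥ 1 - ε ∧ ((νs n) S).toReal ≥ 1 - ε := by
      intro ε hε
      obtain ⟨K, hK, hKb⟩ := htightX (ε/2) (by positivity)
      obtain ⟨L, hL, hLb⟩ := htightY (ε/2) (by positivity)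
      have hKm : MeasurableSet K := hK.isClosed.measurableSet
      have hLm : MeasurableSet L := hL.isClosed.measurableSet
      refine ⟨K ×ˢ L, hK.prod hL, fun n => ?_⟩
      have hmA : MeasurableSet (X n ⁻¹' K) := (hX n) hKm
      have hmB : MeasurableSet (Y n ⁻¹' L) := (hY n) hLm
      have hKb' : (P (X n ⁻¹' K)).toReal ≥ 1 - ε/2 := hKb n
      have hLb' : (P (Y n ⁻¹' L)).toReal ≥ 1 - ε/2 := hLb n
      constructor
      · have hμKL : μs n (K ×ˢ L) = P ((X n ⁻¹' K) ∩ (Y n ⁻¹' L)) := by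
          show (P.map (fun ω => (X n ω, Y n ω))) (K ×ˢ L) = _
          rw [Measure.map_apply (hpair n) (hKm.prod hLm), Set.mk_preimage_prod]
        rw [hμKL]
        have hcompl := prob_toReal_compl P (hmA.inter hmB)
        rw [Set.compl_inter] at hcompl
        have hsub : (P ((X n ⁻¹' K)ᶜ ∪ (Y n ⁻¹' L)ᶜ)).toReal
            ≤ (P (X n ⁻¹' K)ᶜ).toReal + (P (Y n ⁻¹' L)ᶜ).toReal := by
          rw [← ENNReal.toReal_add (measure_ne_top _ _) (measure_ne_top _ _)]
          exact ENNReal.toReal_mono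
            (ENNReal.add_ne_top.mpr ⟨measure_ne_top _ _, measure_ne_top _ _⟩)
            (measure_union_le _ _)
        have hA' := prob_toReal_compl P hmA
        have hB' := prob_toReal_compl P hmB
        linarith
      · have hνKL : νs n (K ×ˢ L) = (P.map (X n)) K * (P.map (Y n)) L := by
          show ((P.map (X n)).prod (P.map (Y n))) (K ×ˢ L) = _
          exact Measure.prod_prod K L
        rw [hνKL, ENNReal.toReal_mul]
        have haK : ((P.map (X n)) K).toReal = (P (X n ⁻¹' K)).toReal := by
          rw [Measure.map_apply (hX n) hKm]
        have haL : ((P.map (Y n)) L).toReal = (P (Y n ⁻¹' L)).toReal := by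
          rw [Measure.map_apply (hY n) hLm]
        have ha0 : 0 ≤ ((P.map (X n)) K).toReal := ENNReal.toReal_nonneg
        have hb0 : 0 ≤ ((P.map (Y n)) L).toReal := ENNReal.toReal_nonneg
        have ha1 : ((P.map (X n)) K).toReal ≤ 1 := by
          have := ENNReal.toReal_mono ENNReal.one_ne_top (prob_le_one (μ := P.map (X n)) (s := K))
          simpa using this
        have hb1 : ((P.map (Y n)) L).toReal ≤ 1 := by
          have := ENNReal.toReal_mono ENNReal.one_ne_top (prob_le_one (μ := P.map (Y n)) (s := L))
          simpa using this
        nlinarith [haK, haL, hKb', hLb', ha0, hb0, ha1, hb1, hε.le]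
    have hmerge := merge μs νs htight' hchar' h hUC.continuous C hC
    refine Filter.Tendsto.congr (fun n => ?_) hmerge
    congr 1
    exact integral_map (φ := fun ω => (X n ω, Y n ω)) (hpair n).aemeasurable
      (f := h) hUC.continuous.aestronglyMeasurable
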